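/- Let q ∈ (0,1), r > 0, s > 0 be fixed. Define P(p) = (1/(1 - p·q))·exp(-s·p·(r + q)) - (p·q + p·r)/((1 - p·q)·(p·r + 1))·exp(-s·(p·r + 1)) for p ∈ (0,1]. Then P is strictly decreasing in p. -/

import Mathlib

open Real Set

/-- The chord-slope auxiliary function is strictly decreasing on (0,1). -/
lemma aux_slope_strictAnti (s : ℝ) (hs : 0 < s) :
    StrictAntiOn (fun x : ℝ => (Real.exp (-s*x) - Real.exp (-s)) / (1 - x))
      (Set.Ioo (0:ℝ) 1) := by
  apply strictAntiOn_of_deriv_neg (convex_Ioo 0 1)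
  · apply ContinuousOn.div
    · fun_prop
    · fun_prop
    · intro x hx
      have : x < 1 := hx.2
      intro h; linarith [sub_eq_zero.mp h]
  · intro x hx
    rw [interior_Ioo] at hx
    obtain ⟨hx0, hx1⟩ := hx
    have hne : (1 - x) ≠ 0 := by linarith
    have h1 : HasDerivAt (fun y : ℝ => Real.exp (-s*y) - Real.exp (-s))
        (Real.exp (-s*x) * (-s)) x := by
      have := (((hasDerivAt_id x).const_mul (-s)).exp).sub_const (Real.exp (-s))
      simpa using this
    have h2 : HasDerivAt (fun y : ℝ => 1 - y) (-1) x := by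
      simpa using (hasDerivAt_id x).const_sub 1
    have hd : HasDerivAt (fun y : ℝ => (Real.exp (-s*y) - Real.exp (-s)) / (1 - y)) _ x :=
      h1.div h2 hne
    rw [hd.deriv]
    have hsq : 0 < (1 - x)^2 := by positivity
    apply div_neg_of_neg_of_pos _ hsq
    -- numerator: exp(-s x) * (-s) * (1 - x) - (exp(-s x) - exp(-s)) * (-1) < 0
    have key : Real.exp (-s*x) - Real.exp (-s) < s * (1 - x) * Real.exp (-s*x) := by
      have hy : -(s * (1 - x)) ≠ 0 := by
        have : 0 < s * (1 - x) := mul_pos hs (by linarith)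
        linarith
      have := Real.add_one_lt_exp hy
      -- -(s(1-x)) + 1 < exp(-(s(1-x)))
      have hsplit : Real.exp (-s) = Real.exp (-s*x) * Real.exp (-(s*(1-x))) := by
        rw [← Real.exp_add]; ring_nf
      rw [hsplit]
      have hxp : 0 < Real.exp (-s*x) := Real.exp_pos _
      nlinarith [hxp]
    nlinarith [Real.exp_pos (-s*x)]

/-- Positivity of the auxiliary function on (0,1). -/
lemma aux_slope_pos (s : ℝ) (hs : 0 < s) {x : ℝ} (hx : x ∈ Set.Ioo (0:ℝ) 1) :
    0 < (Real.exp (-s*x) - Real.exp (-s)) / (1 - x) := by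
  obtain ⟨hx0, hx1⟩ := hx
  apply div_pos
  · have : -s < -s*x := by nlinarith
    have := Real.exp_lt_exp.2 this
    linarith
  · linarith

theorem coverage_strictAnti_in_alignment_prob
    (q r s : ℝ) (hq : q ∈ Set.Ioo (0:ℝ) 1) (hr : 0 < r) (hs : 0 < s) :
    StrictAntiOn
      (fun p : ℝ =>
        (1 / (1 - p * q)) * Real.exp (-s * p * (r + q)) -
          (p * q + p * r) / ((1 - p * q) * (p * r + 1)) * Real.exp (-s * (p * r + 1)))
      (Set.Ioc (0:ℝ) 1) := by
  obtain ⟨hq0, hq1⟩ := hq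
  set f : ℝ → ℝ := fun x => (Real.exp (-s*x) - Real.exp (-s)) / (1 - x) with hfdef
  have key : ∀ p ∈ Set.Ioc (0:ℝ) 1,
      (1 / (1 - p * q)) * Real.exp (-s * p * (r + q)) -
        (p * q + p * r) / ((1 - p * q) * (p * r + 1)) * Real.exp (-s * (p * r + 1))
      = Real.exp (-(s*p*r)) * f (p*q) + Real.exp (-s*(p*r+1))/(p*r+1) := by
    intro p hp
    obtain ⟨hp0, hp1⟩ := hp
    have hu : (1 - p*q) ≠ 0 := by nlinarith
    have hv : (p*r + 1) ≠ 0 := by nlinarith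
    have e1 : Real.exp (-s*p*(r+q)) = Real.exp (-(s*p*r)) * Real.exp (-s*(p*q)) := by
      rw [← Real.exp_add]; ring_nf
    have e2 : Real.exp (-s*(p*r+1)) = Real.exp (-(s*p*r)) * Real.exp (-s) := by
      rw [← Real.exp_add]; ring_nf
    simp only [hfdef]
    rw [e1, e2]
    field_simp
    ring
  intro p1 hp1 p2 hp2 hlt
  simp only
  rw [key p1 hp1, key p2 hp2]
  obtain ⟨hp10, hp11⟩ := hp1
  obtain ⟨hp20, hp21⟩ := hp2
  have hm1 : p1 * q ∈ Set.Ioo (0:ℝ) 1 := ⟨by positivity, by nlinarith⟩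
  have hm2 : p2 * q ∈ Set.Ioo (0:ℝ) 1 := ⟨by positivity, by nlinarith⟩
  have hfa : f (p2*q) < f (p1*q) :=
    aux_slope_strictAnti s hs hm1 hm2 (by nlinarith)
  have hf2 : 0 < f (p2*q) := aux_slope_pos s hs hm2
  have hex : Real.exp (-(s*p2*r)) < Real.exp (-(s*p1*r)) :=
    Real.exp_lt_exp.2 (by nlinarith [mul_lt_mul_of_pos_right (mul_lt_mul_of_pos_left hlt hs) hr])
  have t1 : Real.exp (-(s*p2*r)) * f (p2*q) < Real.exp (-(s*p1*r)) * f (p1*q) :=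
    mul_lt_mul hex hfa.le hf2 (Real.exp_pos _).le
  have t2 : Real.exp (-s*(p2*r+1))/(p2*r+1) < Real.exp (-s*(p1*r+1))/(p1*r+1) := by
    apply div_lt_div₀ (Real.exp_lt_exp.2 (by nlinarith [mul_lt_mul_of_pos_left (mul_lt_mul_of_pos_right hlt hr) hs])) (by nlinarith)
      (Real.exp_pos _).le (by nlinarith)
  linarith
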